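/- Let X be a normal commutator-closed subset of a group G (i.e., X is closed under conjugation by elements of G and [x,y] ∈ X whenever x,y ∈ X), and assume every element of X has finite order. If G is soluble and generated by finitely many elements of X, then G is finite. -/

import Mathlib

open Subgroup

open scoped commutatorElement

universe u

private theorem aux_commute_all {Q : Type*} [Group Q] {T : Set Q}
    (hT : Subgroup.closure T = ⊤) (h : ∀ s ∈ T, ∀ t ∈ T, Commute s t) (a b : Q) :
    Commute a b := by
  have ha : a ∈ Subgroup.closure T := hT ▸ Subgroup.mem_top a
  have hb : b ∈ Subgroup.closure T := hT ▸ Subgroup.mem_top b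
  induction ha, hb using Subgroup.closure_induction₂ with
  | mem x y hx hy => exact h x hx y hy
  | one_left x hx => exact Commute.one_left x
  | one_right x hx => exact Commute.one_right x
  | mul_left x y z _ _ _ h₁ h₂ => exact h₁.mul_left h₂
  | mul_right y z x _ _ _ h₁ h₂ => exact h₁.mul_right h₂
  | inv_left x y _ _ h₁ => exact h₁.inv_left
  | inv_right x y _ _ h₁ => exact h₁.inv_right

private theorem aux_commutator_le {G : Type*} [Group G] {T : Set G}
    (hT : Subgroup.closure T = ⊤) {N : Subgroup G} [N.Normal]
    (h : ∀ s ∈ T, ∀ t ∈ T, ⁅s, t⁆ ∈ N) : commutator G ≤ N := by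
  rw [_root_.commutator_def, Subgroup.commutator_le]
  intro g _ h' _
  rw [← QuotientGroup.eq_one_iff]
  have hcast : ((⁅g, h'⁆ : G) : G ⧸ N) = ⁅(g : G ⧸ N), (h' : G ⧸ N)⁆ := by
    simp [commutatorElement_def]
  rw [hcast, commutatorElement_eq_one_iff_commute]
  have hmap : Subgroup.closure ((QuotientGroup.mk' N) '' T) = ⊤ := by
    rw [← MonoidHom.map_closure, hT]
    exact Subgroup.map_top_of_surjective _ (QuotientGroup.mk'_surjective N)
  have hcomm : ∀ s ∈ (QuotientGroup.mk' N) '' T, ∀ t ∈ (QuotientGroup.mk' N) '' T,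
      Commute s t := by
    rintro _ ⟨s, hs, rfl⟩ _ ⟨t, ht, rfl⟩
    rw [← commutatorElement_eq_one_iff_commute, ← map_commutatorElement,
      QuotientGroup.mk'_apply, QuotientGroup.eq_one_iff]
    exact h s hs t ht
  exact aux_commute_all hmap hcomm _ _

private theorem aux_closure_normal {G : Type*} [Group G] {Z : Set G}
    (h : ∀ g x : G, x ∈ Z → g * x * g⁻¹ ∈ Z) : (Subgroup.closure Z).Normal := by
  constructor
  intro x hx g
  have hle : (Subgroup.closure Z).map (MulAut.conj g).toMonoidHom ≤ Subgroup.closure Z := by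
    rw [MonoidHom.map_closure]
    refine Subgroup.closure_mono ?_
    rintro _ ⟨y, hy, rfl⟩
    simpa [MulAut.conj_apply] using h g y hy
  have : (MulAut.conj g).toMonoidHom x ∈ (Subgroup.closure Z).map (MulAut.conj g).toMonoidHom :=
    ⟨x, hx, rfl⟩
  simpa [MulAut.conj_apply, mul_assoc] using hle this

private theorem aux_exists_finite_subclosure {G : Type*} [Group G] {Z : Set G} {t : G}
    (ht : t ∈ Subgroup.closure Z) :
    ∃ W : Set G, W.Finite ∧ W ⊆ Z ∧ t ∈ Subgroup.closure W := by
  have ht' : t ∈ Submonoid.closure (Z ∪ Z⁻¹) := by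
    rw [← Subgroup.closure_toSubmonoid] at *
    exact ht
  obtain ⟨l, hl, rfl⟩ := Submonoid.exists_list_of_mem_closure ht'
  refine ⟨{y | y ∈ Z ∧ (y ∈ l ∨ y⁻¹ ∈ l)}, ?_, fun y hy => hy.1, ?_⟩
  · refine Set.Finite.subset (l.finite_toSet.union
      (l.finite_toSet.preimage (Set.injOn_of_injective inv_injective))) ?_
    rintro y ⟨-, h | h⟩
    · exact Or.inl h
    · exact Or.inr h
  · refine Subgroup.list_prod_mem _ fun x hx => ?_
    rcases hl x hx with h | h
    · exact Subgroup.subset_closure ⟨h, Or.inl hx⟩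
    · have : x⁻¹ ∈ Subgroup.closure {y | y ∈ Z ∧ (y ∈ l ∨ y⁻¹ ∈ l)} :=
        Subgroup.subset_closure ⟨Set.mem_inv.mp h, Or.inr (by rwa [inv_inv])⟩
      simpa using inv_mem this

private theorem aux_exists_finite_closure_eq {G : Type*} [Group G] {Z : Set G}
    (h : (Subgroup.closure Z).FG) :
    ∃ W : Set G, W.Finite ∧ W ⊆ Z ∧ Subgroup.closure W = Subgroup.closure Z := by
  obtain ⟨T, hTc, hTf⟩ := (Subgroup.fg_iff _).1 h
  have hmem : ∀ t : T, (t : G) ∈ Subgroup.closure Z := fun t =>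
    hTc ▸ Subgroup.subset_closure t.2
  choose W hWf hWZ hWt using fun t : T => aux_exists_finite_subclosure (hmem t)
  haveI : Finite T := hTf.to_subtype
  refine ⟨⋃ t : T, W t, Set.finite_iUnion hWf, Set.iUnion_subset hWZ, le_antisymm ?_ ?_⟩
  · exact Subgroup.closure_mono (Set.iUnion_subset hWZ)
  · rw [← hTc]
    refine Subgroup.closure_le _ |>.2 fun x hx => ?_
    exact SetLike.mem_coe.mpr
      (Subgroup.closure_mono (Set.subset_iUnion W ⟨x, hx⟩) (hWt ⟨x, hx⟩))

private theorem aux_map_derivedSeries_le {G : Type*} [Group G] {K : Subgroup G}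
    (hK : K ≤ commutator G) (n : ℕ) :
    (derivedSeries K n).map K.subtype ≤ derivedSeries G (n + 1) := by
  induction n with
  | zero =>
    rw [derivedSeries_zero, ← MonoidHom.range_eq_map, Subgroup.range_subtype, derivedSeries_one]
    exact hK
  | succ n ih =>
    rw [derivedSeries_succ, derivedSeries_succ, Subgroup.map_commutator]
    exact Subgroup.commutator_mono ih ih

private theorem aux_main : ∀ (n : ℕ) (G : Type u) [Group G] (X : Set G),
    (∀ g x : G, x ∈ X → g * x * g⁻¹ ∈ X) →
    (∀ x y : G, x ∈ X → y ∈ X → ⁅x, y⁆ ∈ X) →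
    (∀ x ∈ X, IsOfFinOrder x) →
    derivedSeries G n = ⊥ →
    (∃ T : Set G, T.Finite ∧ T ⊆ X ∧ Subgroup.closure T = ⊤) →
    Finite G := by
  intro n
  induction n with
  | zero =>
    intro G _ X _ _ _ hbot _
    rw [derivedSeries_zero] at hbot
    have : Subsingleton G := ⟨fun a b => by
      have ha : a ∈ (⊥ : Subgroup G) := hbot ▸ Subgroup.mem_top a
      have hb : b ∈ (⊥ : Subgroup G) := hbot ▸ Subgroup.mem_top b
      rw [Subgroup.mem_bot] at ha hb
      rw [ha, hb]⟩
    exact Finite.of_subsingleton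
  | succ n ih =>
    intro G _ X hconj hcomm hord hbot hgen
    obtain ⟨T, hTf, hTX, hTtop⟩ := hgen
    haveI : Group.FG G := Group.fg_iff.mpr ⟨T, hTtop, hTf⟩
    -- The abelianization is finite
    haveI hQfin : Finite (Abelianization G) := by
      haveI : Group.FG (Abelianization G) :=
        Group.fg_iff.mpr ⟨Abelianization.of '' T, by
          rw [← MonoidHom.map_closure, hTtop]
          exact Subgroup.map_top_of_surjective _ fun q => QuotientGroup.mk_surjective q,
          hTf.image _⟩
      refine CommGroup.finite_of_fg_torsion _ fun q => ?_
      have hle : Subgroup.closure (Abelianization.of '' T) ≤ CommGroup.torsion (Abelianization G) := by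
        refine Subgroup.closure_le _ |>.2 ?_
        rintro _ ⟨t, ht, rfl⟩
        exact (Abelianization.of : G →* Abelianization G).isOfFinOrder (hord t (hTX ht))
      have hq : q ∈ Subgroup.closure (Abelianization.of '' T) := by
        rw [show Subgroup.closure (Abelianization.of '' T) = ⊤ from by
          rw [← MonoidHom.map_closure, hTtop]
          exact Subgroup.map_top_of_surjective _ fun q => QuotientGroup.mk_surjective q]
        exact Subgroup.mem_top q
      exact hle hq
    haveI hQfin' : Finite (G ⧸ commutator G) := hQfin
    haveI : (commutator G).FiniteIndex := Subgroup.finiteIndex_of_finite_quotient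
    haveI : Group.FG ↥(commutator G) := Subgroup.fg_of_index_ne_zero _
    have hcfg : (commutator G).FG := (Group.fg_iff_subgroup_fg _).1 inferInstance
    -- the set Z
    set Z : Set G := X ∩ ↑(commutator G) with hZdef
    haveI hZnormal : (Subgroup.closure Z).Normal := by
      refine aux_closure_normal fun g x hx => ⟨hconj g x hx.1, ?_⟩
      exact (Subgroup.commutator_normal ⊤ ⊤).conj_mem x hx.2 g
    have hZeq : Subgroup.closure Z = commutator G := by
      refine le_antisymm (Subgroup.closure_le _ |>.2 fun x hx => hx.2) ?_
      refine aux_commutator_le hTtop fun s hs t ht => ?_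
      exact Subgroup.subset_closure ⟨hcomm s t (hTX hs) (hTX ht),
        Subgroup.commutator_mem_commutator (Subgroup.mem_top s) (Subgroup.mem_top t)⟩
    have hZfg : (Subgroup.closure Z).FG := hZeq ▸ hcfg
    obtain ⟨W, hWf, hWZ, hWc⟩ := aux_exists_finite_closure_eq hZfg
    have hWcomm : Subgroup.closure W = commutator G := hWc.trans hZeq
    -- apply induction hypothesis to K = closure W
    set K : Subgroup G := Subgroup.closure W with hKdef
    have hKle : K ≤ commutator G := hWcomm.le
    have hKfin : Finite ↥K := by
      refine ih ↥K {x : ↥K | (x : G) ∈ X} ?_ ?_ ?_ ?_ ?_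
      · intro g x hx
        exact hconj ↑g ↑x hx
      · intro x y hx hy
        show ((⁅x, y⁆ : ↥K) : G) ∈ X
        rw [show ((⁅x, y⁆ : ↥K) : G) = ⁅(x : G), (y : G)⁆ from map_commutatorElement K.subtype x y]
        exact hcomm _ _ hx hy
      · intro x hx
        exact (Function.Injective.isOfFinOrder_iff K.subtype_injective).1 (hord _ hx)
      · have h := aux_map_derivedSeries_le hKle n
        rw [hbot, le_bot_iff] at h
        exact Subgroup.map_injective K.subtype_injective (by rw [h, Subgroup.map_bot])
      · refine ⟨K.subtype ⁻¹' W, hWf.preimage (Set.injOn_of_injective K.subtype_injective), ?_, ?_⟩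
        · intro x hx
          exact (hWZ hx).1
        · exact Subgroup.closure_preimage_eq_top W
    have hcommfin : Finite ↥(commutator G) := by
      rw [← hWcomm]
      exact hKfin
    exact Finite.of_equiv _ (Subgroup.groupEquivQuotientProdSubgroup (s := commutator G)).symm

theorem commutator_closed_finite (G : Type*) [Group G] (X : Set G)
    (hconj : ∀ g x : G, x ∈ X → g * x * g⁻¹ ∈ X)
    (hcomm : ∀ x y : G, x ∈ X → y ∈ X → ⁅x, y⁆ ∈ X)
    (hord : ∀ x ∈ X, IsOfFinOrder x)
    (hsol : IsSolvable G)
    (hgen : ∃ S : Finset G, ↑S ⊆ X ∧ Subgroup.closure (S : Set G) = ⊤) :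
    Finite G := by
  obtain ⟨n, hn⟩ := hsol.solvable
  obtain ⟨S, hSX, hStop⟩ := hgen
  exact aux_main n G X hconj hcomm hord hn ⟨↑S, S.finite_toSet, hSX, hStop⟩
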